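/- Let q, r be natural numbers and a : Fin (q+1) → (Fin r → ℤ) a family of integer weight vectors. Let T = (Fin r → ℂˣ) act diagonally on ℂ^{q+1} = (Fin (q+1) → ℂ) by (t • z) j = (∏ i, (t i : ℂ) ^ (−(a j i))) * z j, and let μ(z) i = (∑ j, ‖z j‖² * (a j i)) / (∑ j, ‖z j‖²) for z ≠ 0. Let 𝟙 ∈ ℂ^{q+1} be the all-ones vector and let W̃ ⊆ ℂ^{q+1} be the closure, in the Euclidean topology, of the set { c • (t • 𝟙) : c ∈ ℂˣ, t ∈ T } (the affine cone over the projective toric variety W ⊂ ℙ^q obtained as the orbit closure of [1 : ⋯ : 1]). Then the image μ(W̃ \ {0}) equals the convex hull over ℝ of the finite set { (fun i => (a j i : ℝ)) : j ∈ Fin (q+1) }, i.e., the moment image of the (possibly non-normal) projective toric variety W is the polytope Δ_W(O(1)) associated with W. -/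

import Mathlib

open Finset

namespace MomentPolytopeAux

variable {r q : ℕ}

def dot (x y : Fin r → ℝ) : ℝ := ∑ i, x i * y i

lemma dot_self_nonneg (x : Fin r → ℝ) : 0 ≤ dot x x :=
  Finset.sum_nonneg fun _ _ => mul_self_nonneg _

lemma dot_add (x u v : Fin r → ℝ) : dot x (u + v) = dot x u + dot x v := by
  simp only [dot, Pi.add_apply, mul_add, Finset.sum_add_distrib]

lemma dot_sub (x u v : Fin r → ℝ) : dot x (u - v) = dot x u - dot x v := by
  simp only [dot, Pi.sub_apply, mul_sub, Finset.sum_sub_distrib]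

lemma dot_smul (c : ℝ) (x y : Fin r → ℝ) : dot x (c • y) = c * dot x y := by
  simp only [dot, Pi.smul_apply, smul_eq_mul, Finset.mul_sum]
  exact Finset.sum_congr rfl fun i _ => by ring

lemma dot_comm (x y : Fin r → ℝ) : dot x y = dot y x :=
  Finset.sum_congr rfl fun i _ => mul_comm _ _

lemma dot_sum {n : ℕ} (x : Fin r → ℝ) (f : Fin n → Fin r → ℝ) :
    dot x (∑ j, f j) = ∑ j, dot x (f j) := by
  simp only [dot, Finset.sum_apply, Finset.mul_sum]
  exact Finset.sum_comm

lemma two_dot_le (u v : Fin r → ℝ) : 2 * dot u v ≤ dot u u + dot v v := by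
  have h : 0 ≤ ∑ i, (u i - v i) * (u i - v i) :=
    Finset.sum_nonneg fun _ _ => mul_self_nonneg _
  have e : ∑ i, (u i - v i) * (u i - v i) = dot u u + dot v v - 2 * dot u v := by
    simp only [dot, Finset.mul_sum, ← Finset.sum_add_distrib, ← Finset.sum_sub_distrib]
    exact Finset.sum_congr rfl fun i _ => by ring
  rw [e] at h; linarith

lemma dot_sq_le (u v : Fin r → ℝ) : dot u v ^ 2 ≤ dot u u * dot v v := by
  have h := Finset.sum_mul_sq_le_sq_mul_sq Finset.univ u v
  have h1 : dot u u = ∑ i, u i ^ 2 := Finset.sum_congr rfl fun i _ => (pow_two _).symm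
  have h2 : dot v v = ∑ i, v i ^ 2 := Finset.sum_congr rfl fun i _ => (pow_two _).symm
  rw [h1, h2]; exact h

lemma exp_le_quadratic {x : ℝ} (h : |x| ≤ 1) : Real.exp x ≤ 1 + x + x ^ 2 := by
  have h2 := Real.exp_bound h (n := 2) (by norm_num)
  have hs : ∑ m ∈ Finset.range 2, x ^ m / m.factorial = 1 + x := by
    simp [Finset.sum_range_succ]
  rw [hs] at h2
  have h3 := (abs_le.mp h2).2
  have h4 : |x| ^ 2 = x ^ 2 := sq_abs x
  rw [h4] at h3
  have h5 : ((Nat.succ 2 : ℕ) : ℝ) / (((2:ℕ).factorial : ℝ) * (2:ℕ)) = 3 / 4 := by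
    norm_num [Nat.factorial]
  rw [h5] at h3
  nlinarith [sq_nonneg x]


lemma rexp_zpow (x : ℝ) (n : ℤ) : (Real.exp x) ^ n = Real.exp (n * x) := by
  obtain ⟨m, rfl | rfl⟩ := n.eq_nat_or_neg
  · rw [zpow_natCast, ← Real.exp_nat_mul]
    norm_num
  · rw [zpow_neg, zpow_natCast, ← Real.exp_nat_mul, ← Real.exp_neg]
    push_cast
    ring_nf

lemma norm_unit_zpow (u : ℝ) (n : ℤ) :
    ‖(((Real.exp u : ℝ) : ℂ)) ^ n‖ = Real.exp (n * u) := by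
  rw [norm_zpow, Complex.norm_real, Real.norm_eq_abs, abs_of_pos (Real.exp_pos u), rexp_zpow]


noncomputable def gfun (b : Fin (q + 1) → Fin r → ℝ) (y : Fin r → ℝ) : ℝ :=
  ∑ j, Real.exp (dot y (b j))

noncomputable def mv (b : Fin (q + 1) → Fin r → ℝ) (y : Fin r → ℝ) : Fin r → ℝ :=
  (gfun b y)⁻¹ • ∑ j, Real.exp (dot y (b j)) • b j

noncomputable def Cb (b : Fin (q + 1) → Fin r → ℝ) : ℝ := (∑ j, dot (b j) (b j)) + 1

lemma gfun_pos (b : Fin (q + 1) → Fin r → ℝ) (y : Fin r → ℝ) : 0 < gfun b y :=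
  Finset.sum_pos (fun j _ => Real.exp_pos _) ⟨0, Finset.mem_univ 0⟩

lemma Cb_pos (b : Fin (q + 1) → Fin r → ℝ) : 0 < Cb b := by
  have := Finset.sum_nonneg (fun j (_ : j ∈ Finset.univ) => dot_self_nonneg (b j))
  unfold Cb; linarith

lemma dot_bj_le (b : Fin (q + 1) → Fin r → ℝ) (j : Fin (q + 1)) : dot (b j) (b j) ≤ Cb b := by
  have h := Finset.single_le_sum (f := fun j => dot (b j) (b j))
    (fun j _ => dot_self_nonneg (b j)) (Finset.mem_univ j)
  unfold Cb; linarith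

lemma sum_smul_eq (b : Fin (q + 1) → Fin r → ℝ) (y : Fin r → ℝ) :
    ∑ j, Real.exp (dot y (b j)) • b j = gfun b y • mv b y := by
  rw [mv, smul_inv_smul₀ (gfun_pos b y).ne']

lemma dot_mv_sum (b : Fin (q + 1) → Fin r → ℝ) (y : Fin r → ℝ) :
    ∑ j, Real.exp (dot y (b j)) * dot (mv b y) (b j)
      = gfun b y * dot (mv b y) (mv b y) := by
  have h : dot (mv b y) (∑ j, Real.exp (dot y (b j)) • b j)
      = ∑ j, Real.exp (dot y (b j)) * dot (mv b y) (b j) := by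
    rw [dot_sum]
    exact Finset.sum_congr rfl fun j _ => dot_smul _ _ _
  rw [← h, sum_smul_eq, dot_smul]

lemma Qm_le (b : Fin (q + 1) → Fin r → ℝ) (y : Fin r → ℝ) :
    dot (mv b y) (mv b y) ≤ Cb b := by
  set m := mv b y
  set Q := dot m m with hQ
  set G := gfun b y with hG
  have hGpos : 0 < G := gfun_pos b y
  have key : G * Q = ∑ j, Real.exp (dot y (b j)) * dot m (b j) := (dot_mv_sum b y).symm
  have hle : ∑ j, Real.exp (dot y (b j)) * dot m (b j)
      ≤ ∑ j, Real.exp (dot y (b j)) * ((Q + Cb b) / 2) := by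
    apply Finset.sum_le_sum
    intro j _
    have h1 := two_dot_le m (b j)
    have h2 := dot_bj_le b j
    have := (Real.exp_pos (dot y (b j))).le
    nlinarith
  have hsum : ∑ j, Real.exp (dot y (b j)) * ((Q + Cb b) / 2) = G * ((Q + Cb b) / 2) := by
    rw [← Finset.sum_mul, hG]; rfl
  rw [hsum] at hle
  have := key.trans_le hle
  nlinarith

lemma step (b : Fin (q + 1) → Fin r → ℝ) (y : Fin r → ℝ) :
    gfun b (y - (2 * Cb b)⁻¹ • mv b y)
      ≤ gfun b y * (1 - (2 * Cb b)⁻¹ * dot (mv b y) (mv b y) / 2) := by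
  set C := Cb b with hC
  have hCpos : 0 < C := Cb_pos b
  set t : ℝ := (2 * C)⁻¹ with ht
  have htpos : 0 < t := by positivity
  have htC : t * C = 1 / 2 := by
    rw [ht, inv_mul_eq_div, div_eq_div_iff (by positivity) (by norm_num)]
    ring
  set m := mv b y
  set Q := dot m m with hQdef
  have hQ0 : 0 ≤ Q := dot_self_nonneg m
  have hQC : Q ≤ C := Qm_le b y
  set G := gfun b y with hG
  have hGpos : 0 < G := gfun_pos b y
  -- coordinates
  have hx : ∀ j, dot (y - t • m) (b j) = dot y (b j) + (-t * dot m (b j)) := by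
    intro j
    rw [dot_comm, dot_sub, dot_comm (b j) y, dot_smul, dot_comm (b j) m]
    ring
  have hxsq : ∀ j, (-t * dot m (b j)) ^ 2 ≤ t ^ 2 * (Q * dot (b j) (b j)) := by
    intro j
    have := dot_sq_le m (b j)
    nlinarith
  have hbj : ∀ j, dot (b j) (b j) ≤ C := by
    intro j; rw [hC]; exact dot_bj_le b j
  have habs : ∀ j, |(-t * dot m (b j))| ≤ 1 := by
    intro j
    have h1 := hxsq j
    have h0 := dot_self_nonneg (b j)
    have hQd : Q * dot (b j) (b j) ≤ C * C := mul_le_mul hQC (hbj j) h0 hCpos.le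
    have h2 : t ^ 2 * (Q * dot (b j) (b j)) ≤ t ^ 2 * (C * C) :=
      mul_le_mul_of_nonneg_left hQd (sq_nonneg t)
    have h3 : t ^ 2 * (C * C) = 1 / 4 := by
      rw [show t ^ 2 * (C * C) = (t * C) ^ 2 by ring, htC]; norm_num
    nlinarith [abs_nonneg (-t * dot m (b j)), sq_abs (-t * dot m (b j))]
  have hbound : gfun b (y - t • m) ≤ ∑ j, Real.exp (dot y (b j)) *
      (1 + (-t * dot m (b j)) + (-t * dot m (b j)) ^ 2) := by
    unfold gfun
    apply Finset.sum_le_sum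
    intro j _
    rw [hx j, Real.exp_add]
    exact mul_le_mul_of_nonneg_left (exp_le_quadratic (habs j)) (Real.exp_pos _).le
  have hexpand : ∑ j, Real.exp (dot y (b j)) *
      (1 + (-t * dot m (b j)) + (-t * dot m (b j)) ^ 2)
      = G + (-t) * (∑ j, Real.exp (dot y (b j)) * dot m (b j))
        + ∑ j, Real.exp (dot y (b j)) * (t * dot m (b j)) ^ 2 := by
    rw [hG]; unfold gfun
    rw [Finset.mul_sum, ← Finset.sum_add_distrib, ← Finset.sum_add_distrib]
    exact Finset.sum_congr rfl fun j _ => by ring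
  have hmid : ∑ j, Real.exp (dot y (b j)) * dot m (b j) = G * Q := dot_mv_sum b y
  have hlast : ∑ j, Real.exp (dot y (b j)) * (t * dot m (b j)) ^ 2
      ≤ ∑ j, Real.exp (dot y (b j)) * (t ^ 2 * (Q * C)) := by
    apply Finset.sum_le_sum
    intro j _
    have h1 : (t * dot m (b j)) ^ 2 ≤ t ^ 2 * (Q * C) := by
      have h2 := hxsq j
      have h0 := dot_self_nonneg (b j)
      have hQd : Q * dot (b j) (b j) ≤ Q * C := mul_le_mul_of_nonneg_left (hbj j) hQ0
      have h4 : (t * dot m (b j)) ^ 2 = (-t * dot m (b j)) ^ 2 := by ring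
      nlinarith [mul_le_mul_of_nonneg_left hQd (sq_nonneg t)]
    exact mul_le_mul_of_nonneg_left h1 (Real.exp_pos _).le
  have hlast2 : ∑ j, Real.exp (dot y (b j)) * (t ^ 2 * (Q * C)) = G * (t ^ 2 * (Q * C)) := by
    rw [← Finset.sum_mul, hG]; rfl
  rw [hlast2] at hlast
  rw [hexpand, hmid] at hbound
  have heq : G + (-t) * (G * Q) + G * (t ^ 2 * (Q * C)) = G * (1 - t * Q / 2) := by
    linear_combination G * t * Q * htC
  linarith [hbound, hlast, heq]

lemma gfun_ge_one (b : Fin (q + 1) → Fin r → ℝ) (y : Fin r → ℝ)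
    (hb : ∃ j, 0 ≤ dot y (b j)) : 1 ≤ gfun b y := by
  obtain ⟨j, hj⟩ := hb
  calc (1 : ℝ) = Real.exp 0 := Real.exp_zero.symm
    _ ≤ Real.exp (dot y (b j)) := Real.exp_le_exp.mpr hj
    _ ≤ gfun b y :=
      Finset.single_le_sum (f := fun j => Real.exp (dot y (b j)))
        (fun j _ => (Real.exp_pos _).le) (Finset.mem_univ j)

lemma exists_small (b : Fin (q + 1) → Fin r → ℝ)
    (hb : ∀ y : Fin r → ℝ, ∃ j, 0 ≤ dot y (b j)) {ε : ℝ} (hε : 0 < ε) :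
    ∃ y : Fin r → ℝ, dot (mv b y) (mv b y) < ε := by
  by_contra hcon
  push_neg at hcon
  obtain ⟨C, hC⟩ : ∃ C : ℝ, C = Cb b := ⟨_, rfl⟩
  obtain ⟨t, ht⟩ : ∃ t : ℝ, t = (2 * Cb b)⁻¹ := ⟨_, rfl⟩
  have hCpos : 0 < C := hC ▸ Cb_pos b
  have htpos : 0 < t := by
    rw [ht]; exact inv_pos.mpr (by linarith [Cb_pos b])
  have htC : t * C = 1 / 2 := by
    rw [ht, hC, inv_mul_eq_div, div_eq_div_iff (by linarith [Cb_pos b]) (by norm_num)]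
    ring
  have hεC : ε ≤ C := by
    rw [hC]; exact le_trans (hcon 0) (Qm_le b 0)
  obtain ⟨ρ, hρ⟩ : ∃ ρ : ℝ, ρ = 1 - t * ε / 2 := ⟨_, rfl⟩
  have hρ1 : ρ < 1 := by
    have h1 : 0 < t * ε / 2 := by positivity
    rw [hρ]; linarith
  have hρ0 : 0 < ρ := by
    have h1 : t * ε ≤ t * C := mul_le_mul_of_nonneg_left hεC htpos.le
    rw [htC] at h1
    rw [hρ]; linarith
  have hstep' : ∀ y : Fin r → ℝ,
      gfun b (y - t • mv b y) ≤ gfun b y * (1 - t * dot (mv b y) (mv b y) / 2) := by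
    intro y; rw [ht]; exact step b y
  set Y : ℕ → (Fin r → ℝ) := fun n => Nat.rec (0 : Fin r → ℝ) (fun _ y => y - t • mv b y) n
    with hY
  have hYstep : ∀ n, Y (n + 1) = Y n - t • mv b (Y n) := fun n => rfl
  have hY0 : Y 0 = 0 := rfl
  have hdecay : ∀ n, gfun b (Y n) ≤ (q + 1 : ℝ) * ρ ^ n := by
    intro n
    induction n with
    | zero =>
      have h1 : gfun b (Y 0) = (q + 1 : ℝ) := by
        rw [hY0]
        simp [gfun, dot]
      rw [h1, pow_zero, mul_one]
    | succ n ih =>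
      have hQ : ε ≤ dot (mv b (Y n)) (mv b (Y n)) := hcon (Y n)
      have hfac : 1 - t * dot (mv b (Y n)) (mv b (Y n)) / 2 ≤ ρ := by
        rw [hρ]
        have := mul_le_mul_of_nonneg_left hQ htpos.le
        linarith
      have hGpos : (0 : ℝ) < gfun b (Y n) := gfun_pos b (Y n)
      calc gfun b (Y (n + 1))
          = gfun b (Y n - t • mv b (Y n)) := by rw [hYstep n]
        _ ≤ gfun b (Y n) * (1 - t * dot (mv b (Y n)) (mv b (Y n)) / 2) := hstep' (Y n)
        _ ≤ gfun b (Y n) * ρ := mul_le_mul_of_nonneg_left hfac hGpos.le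
        _ ≤ ((q + 1 : ℝ) * ρ ^ n) * ρ := mul_le_mul_of_nonneg_right ih hρ0.le
        _ = (q + 1 : ℝ) * ρ ^ (n + 1) := by ring
  obtain ⟨n, hn⟩ := exists_pow_lt_of_lt_one
    (show (0 : ℝ) < 1 / (q + 1) by positivity) hρ1
  have hlt : (q + 1 : ℝ) * ρ ^ n < 1 := by
    have hq1 : (0 : ℝ) < (q + 1 : ℝ) := by positivity
    calc (q + 1 : ℝ) * ρ ^ n < (q + 1 : ℝ) * (1 / (q + 1)) :=
          mul_lt_mul_of_pos_left hn hq1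
      _ = 1 := by field_simp
  have hge := gfun_ge_one b (Y n) (hb (Y n))
  have := hdecay n
  linarith


end MomentPolytopeAux

open MomentPolytopeAux Finset

/-- **Moment image of a (possibly non-normal) projective toric variety is the
polytope `Δ_W(O(1))`.**

The torus `T = (Fin r → ℂˣ)` acts on `ℂ^{q+1}` by
`(t • z) j = (∏ i, (t i) ^ (-(a j i))) * z j`, and `W̃` is the Euclidean closure
of the set `{ c • (t • 𝟙) : c ∈ ℂˣ, t ∈ T }` (the affine cone over the orbit
closure of `[1 : ⋯ : 1]` in `ℙ^q`).  The moment map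
`μ z i = (∑ j, ‖z j‖² * a j i) / (∑ j, ‖z j‖²)` sends `W̃ \ {0}` onto the convex
hull of the weight vectors `a j`. -/
theorem moment_image_eq_polytope (q r : ℕ) (a : Fin (q + 1) → Fin r → ℤ) :
    (fun z : Fin (q + 1) → ℂ => fun i : Fin r =>
        (∑ j, ‖z j‖ ^ 2 * (a j i : ℝ)) / (∑ j, ‖z j‖ ^ 2)) ''
      (closure {z : Fin (q + 1) → ℂ | ∃ (c : ℂˣ) (t : Fin r → ℂˣ),
          z = fun j => (c : ℂ) * ((∏ i, (t i : ℂ) ^ (-(a j i))) * 1)} \ {0})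
      = convexHull ℝ (Set.range fun j : Fin (q + 1) => fun i : Fin r => (a j i : ℝ)) := by
  classical
  apply Set.Subset.antisymm
  · -- easy inclusion
    rintro x ⟨z, ⟨_, hz0⟩, rfl⟩
    have hzj : ∃ j, z j ≠ 0 := by
      by_contra h
      push_neg at h
      exact hz0 (Set.mem_singleton_iff.mpr (funext h))
    obtain ⟨j0, hj0⟩ := hzj
    have hSig : 0 < ∑ j, ‖z j‖ ^ 2 :=
      Finset.sum_pos' (fun j _ => by positivity)
        ⟨j0, Finset.mem_univ j0, pow_pos (norm_pos_iff.mpr hj0) 2⟩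
    have hmem := Finset.centerMass_mem_convexHull (Finset.univ : Finset (Fin (q + 1)))
      (w := fun j => ‖z j‖ ^ 2) (fun j _ => by positivity) hSig
      (z := fun j => fun i : Fin r => (a j i : ℝ)) (fun j _ => Set.mem_range_self j)
    have heq : Finset.univ.centerMass (fun j => ‖z j‖ ^ 2)
        (fun j => fun i : Fin r => (a j i : ℝ))
        = fun i : Fin r => (∑ j, ‖z j‖ ^ 2 * (a j i : ℝ)) / (∑ j, ‖z j‖ ^ 2) := by
      funext i
      rw [Finset.centerMass]
      simp only [Finset.sum_apply, Pi.smul_apply, smul_eq_mul]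
      rw [div_eq_inv_mul]
    rw [heq] at hmem
    exact hmem
  · -- hard inclusion
    intro p hp
    set b : Fin (q + 1) → Fin r → ℝ := fun j => (fun i => (a j i : ℝ)) - p with hbdef
    have hbji : ∀ j i, b j i = (a j i : ℝ) - p i := fun j i => rfl
    have hdotb : ∀ (y : Fin r → ℝ) j, dot y (b j) = dot y (fun i => (a j i : ℝ)) - dot y p :=
      fun y j => dot_sub y _ p
    -- the support function property
    have hb : ∀ y : Fin r → ℝ, ∃ j, 0 ≤ dot y (b j) := by
      intro y
      obtain ⟨j, hj⟩ := Finite.exists_max (fun j : Fin (q + 1) => dot y (fun i => (a j i : ℝ)))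
      refine ⟨j, ?_⟩
      have hsub : convexHull ℝ (Set.range fun j : Fin (q + 1) => fun i : Fin r => (a j i : ℝ))
          ⊆ {x | dot y x ≤ dot y (fun i => (a j i : ℝ))} := by
        apply convexHull_min
        · rintro _ ⟨j', rfl⟩
          exact hj j'
        · have hlin : IsLinearMap ℝ (fun x : Fin r → ℝ => dot y x) :=
            ⟨dot_add y, fun c x => by rw [dot_smul]; rfl⟩
          exact convex_halfSpace_le hlin _
      have hle := hsub hp
      rw [hdotb y j]
      simpa [sub_nonneg] using hle
    -- the compact set and continuous map
    set S : Set (Fin (q + 1) → ℂ) := {z | ∃ (c : ℂˣ) (t : Fin r → ℂˣ),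
        z = fun j => (c : ℂ) * ((∏ i, (t i : ℂ) ^ (-(a j i))) * 1)} with hSdef
    set K : Set (Fin (q + 1) → ℂ) :=
      closure S ∩ {z | ∑ j, ‖z j‖ ^ 2 = 1} with hKdef
    set F : (Fin (q + 1) → ℂ) → (Fin r → ℝ) :=
      fun z => fun i => ∑ j, ‖z j‖ ^ 2 * (a j i : ℝ) with hFdef
    have hcont_sum : Continuous fun z : Fin (q + 1) → ℂ => ∑ j, ‖z j‖ ^ 2 :=
      continuous_finset_sum _ fun j _ => (continuous_apply j).norm.pow 2
    have hK_closed : IsClosed K :=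
      isClosed_closure.inter (isClosed_eq hcont_sum continuous_const)
    have hK_bdd : Bornology.IsBounded K := by
      rw [isBounded_iff_forall_norm_le]
      refine ⟨1, fun z hz => ?_⟩
      rw [pi_norm_le_iff_of_nonneg zero_le_one]
      intro j
      have hsum : ∑ j, ‖z j‖ ^ 2 = 1 := hz.2
      have hle : ‖z j‖ ^ 2 ≤ ∑ j, ‖z j‖ ^ 2 := Finset.single_le_sum
        (f := fun j => ‖z j‖ ^ 2) (fun j _ => by positivity) (Finset.mem_univ j)
      rw [hsum] at hle
      nlinarith [norm_nonneg (z j)]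
    have hK_cpt : IsCompact K := Metric.isCompact_of_isClosed_isBounded hK_closed hK_bdd
    have hF_cont : Continuous F :=
      continuous_pi fun i => continuous_finset_sum _ fun j _ =>
        ((continuous_apply j).norm.pow 2).mul continuous_const
    have hFK_closed : IsClosed (F '' K) := (hK_cpt.image hF_cont).isClosed
    -- points on the torus orbit hitting the values `mv b y + p`
    have hmemFK : ∀ y : Fin r → ℝ, (fun i => mv b y i + p i) ∈ F '' K := by
      intro y
      have hGpos := gfun_pos b y
      set t : Fin r → ℂˣ := fun i => Units.mk0 ((Real.exp (-(y i) / 2) : ℝ) : ℂ)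
        (by exact_mod_cast (Real.exp_pos _).ne') with htdef
      set c : ℂˣ := Units.mk0 ((Real.exp (-(dot y p + Real.log (gfun b y)) / 2) : ℝ) : ℂ)
        (by exact_mod_cast (Real.exp_pos _).ne') with hcdef
      set z : Fin (q + 1) → ℂ :=
        fun j => (c : ℂ) * ((∏ i, (t i : ℂ) ^ (-(a j i))) * 1) with hzdef
      have hnorm : ∀ j, ‖z j‖ ^ 2 = Real.exp (dot y (b j)) / gfun b y := by
        intro j
        have hfac : ∀ i : Fin r, ‖(t i : ℂ) ^ (-(a j i))‖
            = Real.exp ((a j i : ℝ) * (y i / 2)) := by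
          intro i
          have hval : ((t i : ℂ)) = ((Real.exp (-(y i) / 2) : ℝ) : ℂ) := rfl
          rw [hval, norm_unit_zpow]
          congr 1
          push_cast
          ring
        have h1 : ‖z j‖ = Real.exp (-(dot y p + Real.log (gfun b y)) / 2)
            * Real.exp (∑ i, (a j i : ℝ) * (y i / 2)) := by
          rw [hzdef]
          rw [norm_mul, norm_mul, norm_one, mul_one, norm_prod]
          congr 1
          · rw [hcdef, Units.val_mk0, Complex.norm_real, Real.norm_eq_abs,
              abs_of_pos (Real.exp_pos _)]
          · rw [Finset.prod_congr rfl fun i _ => hfac i, ← Real.exp_sum]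
        have e2 : (∑ i, (a j i : ℝ) * (y i / 2)) + (∑ i, (a j i : ℝ) * (y i / 2))
            = ∑ i, (a j i : ℝ) * y i := by
          rw [← Finset.sum_add_distrib]
          exact Finset.sum_congr rfl fun i _ => by ring
        have h2 : ‖z j‖ ^ 2 = Real.exp (-(dot y p + Real.log (gfun b y))
            + ∑ i, (a j i : ℝ) * y i) := by
          rw [h1, ← Real.exp_add, sq, ← Real.exp_add]
          congr 1
          linarith [e2]
        have h3 : dot y (b j) = (∑ i, (a j i : ℝ) * y i) - dot y p := by
          rw [hdotb y j]
          congr 1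
          unfold dot
          exact Finset.sum_congr rfl fun i _ => mul_comm _ _
        rw [h2, show -(dot y p + Real.log (gfun b y)) + ∑ i, (a j i : ℝ) * y i
          = dot y (b j) - Real.log (gfun b y) by rw [h3]; ring,
          Real.exp_sub, Real.exp_log hGpos]
      have hsum1 : ∑ j, ‖z j‖ ^ 2 = 1 := by
        calc ∑ j, ‖z j‖ ^ 2 = ∑ j, Real.exp (dot y (b j)) / gfun b y :=
              Finset.sum_congr rfl fun j _ => hnorm j
          _ = gfun b y / gfun b y := by
              rw [← Finset.sum_div]
              rfl
          _ = 1 := div_self hGpos.ne'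
      refine ⟨z, ⟨subset_closure ⟨c, t, hzdef⟩, hsum1⟩, ?_⟩
      funext i
      have hmvi : mv b y i = (gfun b y)⁻¹ * ∑ j, Real.exp (dot y (b j)) * b j i := by
        rw [mv]
        simp [Finset.sum_apply]
      have hsplit : ∑ j, Real.exp (dot y (b j)) * b j i
          = (∑ j, Real.exp (dot y (b j)) * (a j i : ℝ)) - gfun b y * p i := by
        calc ∑ j, Real.exp (dot y (b j)) * b j i
            = ∑ j, (Real.exp (dot y (b j)) * (a j i : ℝ) - Real.exp (dot y (b j)) * p i) :=
              Finset.sum_congr rfl fun j _ => by rw [hbji]; ring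
          _ = (∑ j, Real.exp (dot y (b j)) * (a j i : ℝ))
              - ∑ j, Real.exp (dot y (b j)) * p i := Finset.sum_sub_distrib _ _
          _ = (∑ j, Real.exp (dot y (b j)) * (a j i : ℝ)) - gfun b y * p i := by
              rw [← Finset.sum_mul]
              rfl
      show ∑ j, ‖z j‖ ^ 2 * (a j i : ℝ) = mv b y i + p i
      have hL : ∑ j, ‖z j‖ ^ 2 * (a j i : ℝ)
          = (∑ j, Real.exp (dot y (b j)) * (a j i : ℝ)) / gfun b y := by
        rw [Finset.sum_div]
        exact Finset.sum_congr rfl fun j _ => by rw [hnorm j]; ring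
      rw [hL, hmvi, hsplit]
      field_simp
      ring
    -- p is in the closure of the image
    have hpcl : p ∈ closure (F '' K) := by
      rw [Metric.mem_closure_iff]
      intro ε hε
      obtain ⟨y, hy⟩ := exists_small b hb (show (0 : ℝ) < ε ^ 2 by positivity)
      refine ⟨_, hmemFK y, ?_⟩
      rw [dist_pi_lt_iff hε]
      intro i
      have h1 : mv b y i * mv b y i ≤ dot (mv b y) (mv b y) :=
        Finset.single_le_sum (f := fun i => mv b y i * mv b y i)
          (fun i _ => mul_self_nonneg _) (Finset.mem_univ i)
      have h2 : mv b y i * mv b y i < ε ^ 2 := lt_of_le_of_lt h1 hy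
      rw [Real.dist_eq, show p i - (mv b y i + p i) = -(mv b y i) by ring, abs_neg]
      nlinarith [abs_nonneg (mv b y i), abs_mul_abs_self (mv b y i)]
    obtain ⟨z, hzK, hFz⟩ := hFK_closed.closure_subset hpcl
    have hzsum : ∑ j, ‖z j‖ ^ 2 = 1 := hzK.2
    have hz0 : z ∉ ({0} : Set (Fin (q + 1) → ℂ)) := by
      intro h0
      have hz00 : z = 0 := h0
      rw [hz00] at hzsum
      simp at hzsum
    refine ⟨z, ⟨hzK.1, hz0⟩, ?_⟩
    funext i
    show (∑ j, ‖z j‖ ^ 2 * (a j i : ℝ)) / (∑ j, ‖z j‖ ^ 2) = p i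
    rw [hzsum, div_one]
    exact congrFun hFz i
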